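/- Single-source constant-witness existence: For any instance (G = (V, E, α), v_s, k) of Reach Improvement with optimum reach Υ* = max over sets F of at most k new edges of reach_{G+F}(v_s), there exists a set S of at most 2k new edges, all incident to v_s, such that for every vertex u ∈ V there exists W ⊆ S with |W| ≤ 1 and prox_{G+W}(v_s, u) ≥ Υ*/(2k + 2); that is, S is a (1, Υ*/(2k+2))-witnessing solution of size at most 2k. -/

import Mathlib

open scoped Classical

variable {V : Type*} [Fintype V] [DecidableEq V]

/-- The proximity of `u` and `v` in the information graph `(V, E, α)`: the probability
that `u` and `v` are connected in a graph obtained by retaining each edge of `E`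
independently with probability `α`. -/
noncomputable def prox (E : Finset (Sym2 V)) (α : ℝ) (u v : V) : ℝ :=
  ∑ F ∈ E.powerset,
    if (SimpleGraph.fromEdgeSet (F : Set (Sym2 V))).Reachable u v then
      α ^ F.card * (1 - α) ^ (E \ F).card
    else 0

/-- The broadcast of an information graph: the minimum proximity over pairs of distinct
vertices. -/
noncomputable def broadcast (E : Finset (Sym2 V)) (α : ℝ) : ℝ :=
  ⨅ p : {p : V × V // p.1 ≠ p.2}, prox E α p.1.1 p.1.2

/-- The optimum broadcast achievable by adding at most `k` vertex pairs disjoint from `E`. -/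
noncomputable def optBroadcast (E : Finset (Sym2 V)) (α : ℝ) (k : ℕ) : ℝ :=
  ⨆ F : {F : Finset (Sym2 V) // F.card ≤ k ∧ ∀ e ∈ F, e ∉ E}, broadcast (E ∪ F.1) α

/-- The reach of a vertex `v`: the minimum proximity of `v` to any other vertex. -/
noncomputable def reach (E : Finset (Sym2 V)) (α : ℝ) (v : V) : ℝ :=
  ⨅ u : {u : V // u ≠ v}, prox E α v u.1

/-- The optimum reach of a source vertex `vs` achievable by adding at most `k`
vertex pairs disjoint from `E`. -/
noncomputable def optReach (E : Finset (Sym2 V)) (α : ℝ) (k : ℕ) (vs : V) : ℝ :=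
  ⨆ F : {F : Finset (Sym2 V) // F.card ≤ k ∧ ∀ e ∈ F, e ∉ E}, reach (E ∪ F.1) α vs

/-- The probability that, in a sampled graph, all edges of at least one member of the
family `P` of edge-lists are retained. -/
noncomputable def prPaths (E : Finset (Sym2 V)) (α : ℝ) (P : Set (List (Sym2 V))) : ℝ :=
  ∑ F ∈ E.powerset,
    if ∃ p ∈ P, ∀ e ∈ p, e ∈ F then α ^ F.card * (1 - α) ^ (E \ F).card
    else 0

set_option linter.unusedSectionVars false

noncomputable def PrE (E : Finset (Sym2 V)) (α : ℝ) (Q : Finset (Sym2 V) → Prop) : ℝ :=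
  ∑ F ∈ E.powerset, if Q F then α ^ F.card * (1 - α) ^ (E \ F).card else 0

variable {E D : Finset (Sym2 V)} {α : ℝ} {Q R : Finset (Sym2 V) → Prop}

lemma PrE_nonneg (hα0 : 0 ≤ α) (hα1 : α ≤ 1) : 0 ≤ PrE E α Q := by
  refine Finset.sum_nonneg fun F _ => ?_
  have h1 : (0:ℝ) ≤ 1 - α := by linarith
  split_ifs
  · positivity
  · exact le_refl 0

lemma PrE_congr (h : ∀ F ∈ E.powerset, (Q F ↔ R F)) : PrE E α Q = PrE E α R :=
  Finset.sum_congr rfl fun F hF => if_congr (h F hF) rfl rfl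

lemma PrE_mono (hα0 : 0 ≤ α) (hα1 : α ≤ 1) (h : ∀ F ∈ E.powerset, Q F → R F) :
    PrE E α Q ≤ PrE E α R := by
  have hw : ∀ F : Finset (Sym2 V), (0:ℝ) ≤ α ^ F.card * (1 - α) ^ (E \ F).card :=
    fun F => mul_nonneg (pow_nonneg hα0 _) (pow_nonneg (by linarith) _)
  refine Finset.sum_le_sum fun F hF => ?_
  split_ifs with h1 h2
  · exact le_refl _
  · exact absurd (h F hF h1) h2
  · exact hw F
  · exact le_refl _

lemma PrE_true (hα0 : 0 ≤ α) (hα1 : α ≤ 1) : PrE E α (fun _ => True) = 1 := by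
  have := Finset.prod_add (fun _ : Sym2 V => α) (fun _ : Sym2 V => 1 - α) E
  simp only [add_sub_cancel, Finset.prod_const, one_pow] at this
  simp [PrE, ← this]

lemma PrE_le_one (hα0 : 0 ≤ α) (hα1 : α ≤ 1) : PrE E α Q ≤ 1 := by
  rw [← PrE_true (E := E) hα0 hα1]
  exact PrE_mono hα0 hα1 fun F _ _ => trivial

lemma PrE_or_le (hα0 : 0 ≤ α) (hα1 : α ≤ 1) :
    PrE E α (fun F => Q F ∨ R F) ≤ PrE E α Q + PrE E α R := by
  rw [PrE, PrE, PrE, ← Finset.sum_add_distrib]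
  have hw : ∀ F : Finset (Sym2 V), (0:ℝ) ≤ α ^ F.card * (1 - α) ^ (E \ F).card :=
    fun F => mul_nonneg (pow_nonneg hα0 _) (pow_nonneg (by linarith) _)
  refine Finset.sum_le_sum fun F hF => ?_
  split_ifs with h1 h2 h3 <;> first
    | linarith [hw F]
    | (exfalso; tauto)

lemma PrE_exists_le {ι : Type*} (hα0 : 0 ≤ α) (hα1 : α ≤ 1) (s : Finset ι)
    (Q : ι → Finset (Sym2 V) → Prop) :
    PrE E α (fun F => ∃ i ∈ s, Q i F) ≤ ∑ i ∈ s, PrE E α (Q i) := by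
  induction s using Finset.induction_on with
  | empty => simp [PrE]
  | insert a s hx ih =>
    rw [Finset.sum_insert hx]
    refine le_trans (le_trans (PrE_mono hα0 hα1 (R := fun F => Q a F ∨ ∃ i ∈ s, Q i F)
      fun F _ h => ?_) (PrE_or_le hα0 hα1)) (by linarith [ih])
    obtain ⟨i, hi, hQ⟩ := h
    rcases Finset.mem_insert.mp hi with rfl | hi
    · exact Or.inl hQ
    · exact Or.inr ⟨i, hi, hQ⟩

lemma PrE_insert {e : Sym2 V} (he : e ∉ E) :
    PrE (insert e E) α Q = (1 - α) * PrE E α Q + α * PrE E α (fun F => Q (insert e F)) := by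
  rw [PrE, Finset.powerset_insert, Finset.sum_union, Finset.sum_image]
  · have h1 : ∀ F ∈ E.powerset, (if Q F then α ^ F.card * (1-α) ^ ((insert e E) \ F).card else 0)
        = (1-α) * if Q F then α ^ F.card * (1-α) ^ (E \ F).card else 0 := by
      intro F hF
      have hF' := Finset.mem_powerset.mp hF
      have heF : e ∉ F := fun h => he (hF' h)
      have : (insert e E) \ F = insert e (E \ F) := by
        ext x; simp only [Finset.mem_sdiff, Finset.mem_insert]; constructor <;> intro h
        · tauto
        · rcases h with rfl | h
          · exact ⟨Or.inl rfl, heF⟩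
          · tauto
      rw [this, Finset.card_insert_of_notMem (by simp [he])]
      split_ifs <;> ring
    have h2 : ∀ F ∈ E.powerset,
        (if Q (insert e F) then α ^ (insert e F).card * (1-α) ^ ((insert e E) \ (insert e F)).card else 0)
        = α * if Q (insert e F) then α ^ F.card * (1-α) ^ (E \ F).card else 0 := by
      intro F hF
      have hF' := Finset.mem_powerset.mp hF
      have heF : e ∉ F := fun h => he (hF' h)
      have : (insert e E) \ (insert e F) = E \ F := by
        ext x; simp only [Finset.mem_sdiff, Finset.mem_insert]
        constructor <;> intro h
        · rcases h.1 with rfl | h1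
          · exact absurd (Or.inl rfl) h.2
          · exact ⟨h1, fun hf => h.2 (Or.inr hf)⟩
        · exact ⟨Or.inr h.1, fun hf => (by rcases hf with rfl | hf; exact he h.1; exact h.2 hf)⟩
      rw [this, Finset.card_insert_of_notMem heF]
      split_ifs <;> ring
    rw [Finset.sum_congr rfl h1, Finset.sum_congr rfl h2, ← Finset.mul_sum, ← Finset.mul_sum]
    rfl
  · intro F1 h1 F2 h2 hEq
    have e1 : e ∉ F1 := fun h => he (Finset.mem_powerset.mp h1 h)
    have e2 : e ∉ F2 := fun h => he (Finset.mem_powerset.mp h2 h)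
    have := congrArg (Finset.erase · e) hEq
    simpa [Finset.erase_insert, e1, e2] using this
  · rw [Finset.disjoint_left]
    intro F hF1 hF2
    obtain ⟨G, hG, rfl⟩ := Finset.mem_image.mp hF2
    exact (fun h => he (Finset.mem_powerset.mp hF1 h)) (Finset.mem_insert_self e G)

lemma PrE_restrict (hD : ∀ f ∈ D, f ∉ E) :
    PrE (E ∪ D) α (fun F => Q (F ∩ E)) = PrE E α Q := by
  induction D using Finset.induction_on with
  | empty =>
    rw [Finset.union_empty]
    exact PrE_congr fun F hF => by
      rw [Finset.inter_eq_left.mpr (Finset.mem_powerset.mp hF)]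
  | insert f D' hx ih =>
    have hfE : f ∉ E := hD f (Finset.mem_insert_self f D')
    have h1 : E ∪ insert f D' = insert f (E ∪ D') := Finset.union_insert f E D'
    have h2 : f ∉ E ∪ D' := by
      simp only [Finset.mem_union]
      rintro (h | h)
      · exact hfE h
      · exact hx h
    rw [h1, PrE_insert h2]
    have h3 : PrE (E ∪ D') α (fun F => Q ((insert f F) ∩ E))
        = PrE (E ∪ D') α (fun F => Q (F ∩ E)) :=
      PrE_congr fun F hF => by rw [Finset.insert_inter_of_notMem hfE]
    rw [h3, ih (fun g hg => hD g (Finset.mem_insert_of_mem hg))]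
    ring

lemma PrE_edge_restrict {e : Sym2 V} (hα0 : 0 ≤ α) (hα1 : α ≤ 1)
    (hD : ∀ f ∈ D, f ∉ E) (heD : e ∈ D) :
    PrE (E ∪ D) α (fun F => e ∈ F ∧ Q (F ∩ E)) = α * PrE E α Q := by
  have heE : e ∉ E := hD e heD
  have h1 : E ∪ D = insert e (E ∪ D.erase e) := by
    ext x
    simp only [Finset.mem_union, Finset.mem_insert, Finset.mem_erase]
    constructor
    · rintro (h | h)
      · exact Or.inr (Or.inl h)
      · by_cases hx : x = e
        · exact Or.inl hx
        · exact Or.inr (Or.inr ⟨hx, h⟩)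
    · rintro (rfl | h | h)
      · exact Or.inr heD
      · exact Or.inl h
      · exact Or.inr h.2
  have h2 : e ∉ E ∪ D.erase e := by
    simp only [Finset.mem_union, Finset.mem_erase]
    rintro (h | h)
    · exact heE h
    · exact h.1 rfl
  rw [h1, PrE_insert h2]
  have h3 : PrE (E ∪ D.erase e) α (fun F => e ∈ F ∧ Q (F ∩ E))
      = PrE (E ∪ D.erase e) α (fun _ => False) :=
    PrE_congr fun F hF => by
      simp only [iff_false]
      rintro ⟨heF, -⟩
      exact h2 (Finset.mem_powerset.mp hF heF)
  have h4 : PrE (E ∪ D.erase e) α (fun _ => False) = 0 := by simp [PrE]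
  have h5 : PrE (E ∪ D.erase e) α (fun F => e ∈ insert e F ∧ Q ((insert e F) ∩ E))
      = PrE (E ∪ D.erase e) α (fun F => Q (F ∩ E)) :=
    PrE_congr fun F hF => by
      rw [Finset.insert_inter_of_notMem heE]
      simp
  rw [h3, h4, h5, PrE_restrict (fun g hg => hD g (Finset.mem_of_mem_erase hg))]
  ring

lemma reach_decomp (F E : Finset (Sym2 V)) {a b : V}
    (h : (SimpleGraph.fromEdgeSet (F : Set (Sym2 V))).Reachable a b) :
    (SimpleGraph.fromEdgeSet ((F ∩ E : Finset (Sym2 V)) : Set (Sym2 V))).Reachable a b ∨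
      ∃ f ∈ F, f ∉ E ∧ ∃ y, y ∈ f ∧
        (SimpleGraph.fromEdgeSet ((F ∩ E : Finset (Sym2 V)) : Set (Sym2 V))).Reachable y b := by
  obtain ⟨w⟩ := h
  induction w with
  | nil => exact Or.inl (SimpleGraph.Reachable.refl _)
  | cons h' p ih =>
    rename_i x c _
    rw [SimpleGraph.fromEdgeSet_adj] at h'
    obtain ⟨hmem, hne⟩ := h'
    have hmem' : s(x, c) ∈ F := by exact_mod_cast hmem
    by_cases hE : s(x, c) ∈ E
    · have hadj : (SimpleGraph.fromEdgeSet ((F ∩ E : Finset (Sym2 V)) : Set (Sym2 V))).Adj x c := by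
        rw [SimpleGraph.fromEdgeSet_adj]
        exact ⟨by exact_mod_cast Finset.mem_inter.mpr ⟨hmem', hE⟩, hne⟩
      rcases ih with hr | ⟨f, hfF, hfE, y, hy, hr⟩
      · exact Or.inl (hadj.reachable.trans hr)
      · exact Or.inr ⟨f, hfF, hfE, y, hy, hr⟩
    · rcases ih with hr | ⟨f, hfF, hfE, y, hy, hr⟩
      · exact Or.inr ⟨s(x, c), hmem', hE, c, Sym2.mem_mk_right x c, hr⟩
      · exact Or.inr ⟨f, hfF, hfE, y, hy, hr⟩

noncomputable def epts (f : Sym2 V) : Finset V := Finset.univ.filter (· ∈ f)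

lemma mem_epts {y : V} {f : Sym2 V} : y ∈ epts f ↔ y ∈ f := by simp [epts]

lemma card_epts (f : Sym2 V) : (epts f).card ≤ 2 := by
  induction f using Sym2.ind with
  | _ x y =>
    have : epts s(x, y) ⊆ {x, y} := by
      intro z hz
      rw [mem_epts, Sym2.mem_iff] at hz
      simpa using hz
    exact le_trans (Finset.card_le_card this) (le_trans (Finset.card_insert_le _ _) (by simp))

lemma prox_eq_PrE (u v : V) :
    prox E α u v = PrE E α (fun F => (SimpleGraph.fromEdgeSet (F : Set (Sym2 V))).Reachable u v) := by
  unfold prox PrE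
  refine Finset.sum_congr rfl fun F _ => ?_
  by_cases h : (SimpleGraph.fromEdgeSet (F : Set (Sym2 V))).Reachable u v <;> simp [h]

lemma prox_nonneg (hα0 : 0 ≤ α) (hα1 : α ≤ 1) (u v : V) : 0 ≤ prox E α u v := by
  rw [prox_eq_PrE]; exact PrE_nonneg hα0 hα1

lemma prox_le_one (hα0 : 0 ≤ α) (hα1 : α ≤ 1) (u v : V) : prox E α u v ≤ 1 := by
  rw [prox_eq_PrE]; exact PrE_le_one hα0 hα1

lemma prox_self (hα0 : 0 ≤ α) (hα1 : α ≤ 1) (v : V) : prox E α v v = 1 := by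
  rw [prox_eq_PrE, PrE_congr (R := fun _ => True) fun F _ => by
    simp [SimpleGraph.Reachable.refl]]
  exact PrE_true hα0 hα1

lemma reach_lift {F : Finset (Sym2 V)} {vs y u : V} (hne : vs ≠ y)
    (hr : (SimpleGraph.fromEdgeSet (F : Set (Sym2 V))).Reachable y u) :
    (SimpleGraph.fromEdgeSet ((insert s(vs, y) F : Finset (Sym2 V)) : Set (Sym2 V))).Reachable vs u := by
  have hadj : (SimpleGraph.fromEdgeSet ((insert s(vs, y) F : Finset (Sym2 V)) : Set (Sym2 V))).Adj vs y := by
    rw [SimpleGraph.fromEdgeSet_adj]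
    exact ⟨by simp, hne⟩
  refine hadj.reachable.trans (hr.mono ?_)
  exact SimpleGraph.fromEdgeSet_mono (by exact_mod_cast Finset.subset_insert _ F)

lemma prox_insert_ge (hα0 : 0 ≤ α) (hα1 : α ≤ 1) {vs y : V} (hne : vs ≠ y)
    (he : s(vs, y) ∉ E) (u : V) :
    α * prox E α y u ≤ prox (insert s(vs, y) E) α vs u := by
  rw [prox_eq_PrE (E := insert s(vs, y) E) vs u, PrE_insert he]
  have h1 : PrE E α (fun F => (SimpleGraph.fromEdgeSet (F : Set (Sym2 V))).Reachable y u)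
      ≤ PrE E α (fun F =>
        (SimpleGraph.fromEdgeSet ((insert s(vs, y) F : Finset (Sym2 V)) : Set (Sym2 V))).Reachable vs u) :=
    PrE_mono hα0 hα1 fun F _ hr => reach_lift hne hr
  have h2 : (0:ℝ) ≤ PrE E α (fun F =>
      (SimpleGraph.fromEdgeSet (F : Set (Sym2 V))).Reachable vs u) := PrE_nonneg hα0 hα1
  rw [prox_eq_PrE (E := E) y u]
  nlinarith [mul_le_mul_of_nonneg_left h1 hα0]

lemma prox_mem_ge (hα0 : 0 ≤ α) (hα1 : α ≤ 1) {vs y : V} (hne : vs ≠ y)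
    (he : s(vs, y) ∈ E) (u : V) :
    α * prox E α y u ≤ prox E α vs u := by
  set e := s(vs, y) with hedef
  set E' := E.erase e with hE'
  have he' : e ∉ E' := Finset.notMem_erase e E
  have hE : E = insert e E' := (Finset.insert_erase he).symm
  have hvs : prox E α vs u = (1 - α) * PrE E' α
        (fun F => (SimpleGraph.fromEdgeSet (F : Set (Sym2 V))).Reachable vs u)
      + α * PrE E' α (fun F =>
        (SimpleGraph.fromEdgeSet ((insert e F : Finset (Sym2 V)) : Set (Sym2 V))).Reachable vs u) := by
    rw [prox_eq_PrE (E := E) vs u]; conv_lhs => rw [hE]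
    rw [PrE_insert he']
  have hy : prox E α y u = (1 - α) * PrE E' α
        (fun F => (SimpleGraph.fromEdgeSet (F : Set (Sym2 V))).Reachable y u)
      + α * PrE E' α (fun F =>
        (SimpleGraph.fromEdgeSet ((insert e F : Finset (Sym2 V)) : Set (Sym2 V))).Reachable y u) := by
    rw [prox_eq_PrE (E := E) y u]; conv_lhs => rw [hE]
    rw [PrE_insert he']
  set C := PrE E' α (fun F =>
    (SimpleGraph.fromEdgeSet ((insert e F : Finset (Sym2 V)) : Set (Sym2 V))).Reachable vs u) with hC
  have ha : PrE E' α (fun F => (SimpleGraph.fromEdgeSet (F : Set (Sym2 V))).Reachable y u) ≤ C :=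
    PrE_mono hα0 hα1 fun F _ hr => reach_lift hne hr
  have hb : PrE E' α (fun F =>
      (SimpleGraph.fromEdgeSet ((insert e F : Finset (Sym2 V)) : Set (Sym2 V))).Reachable y u) ≤ C := by
    refine PrE_mono hα0 hα1 fun F _ hr => ?_
    have hadj : (SimpleGraph.fromEdgeSet ((insert e F : Finset (Sym2 V)) : Set (Sym2 V))).Adj vs y := by
      rw [SimpleGraph.fromEdgeSet_adj]
      exact ⟨by simp [hedef], hne⟩
    exact hadj.reachable.trans hr
  have hX : (0:ℝ) ≤ PrE E' α
      (fun F => (SimpleGraph.fromEdgeSet (F : Set (Sym2 V))).Reachable vs u) := PrE_nonneg hα0 hα1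
  have ha0 : (0:ℝ) ≤ PrE E' α
      (fun F => (SimpleGraph.fromEdgeSet (F : Set (Sym2 V))).Reachable y u) := PrE_nonneg hα0 hα1
  have hb0 : (0:ℝ) ≤ PrE E' α (fun F =>
      (SimpleGraph.fromEdgeSet ((insert e F : Finset (Sym2 V)) : Set (Sym2 V))).Reachable y u) :=
    PrE_nonneg hα0 hα1
  rw [hvs, hy]
  nlinarith [mul_nonneg (mul_nonneg hα0 (by linarith : (0:ℝ) ≤ 1 - α)) (sub_nonneg.mpr ha),
    mul_nonneg (mul_nonneg hα0 hα0) (sub_nonneg.mpr hb),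
    mul_nonneg (by linarith : (0:ℝ) ≤ 1 - α) hX]

lemma prox_union_le (hα0 : 0 ≤ α) (hα1 : α ≤ 1) (hD : ∀ f ∈ D, f ∉ E) (a u : V) :
    prox (E ∪ D) α a u ≤ prox E α a u + ∑ f ∈ D, ∑ y ∈ epts f, α * prox E α y u := by
  rw [prox_eq_PrE (E := E ∪ D) a u]
  have step1 : PrE (E ∪ D) α
      (fun F => (SimpleGraph.fromEdgeSet (F : Set (Sym2 V))).Reachable a u)
      ≤ PrE (E ∪ D) α (fun F =>
        (SimpleGraph.fromEdgeSet ((F ∩ E : Finset (Sym2 V)) : Set (Sym2 V))).Reachable a u ∨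
        ∃ f ∈ D, f ∈ F ∧ ∃ y ∈ epts f,
          (SimpleGraph.fromEdgeSet ((F ∩ E : Finset (Sym2 V)) : Set (Sym2 V))).Reachable y u) := by
    refine PrE_mono hα0 hα1 fun F hF h => ?_
    rcases reach_decomp F E h with hr | ⟨f, hfF, hfE, y, hy, hr⟩
    · exact Or.inl hr
    · have hfD : f ∈ D := by
        have := Finset.mem_powerset.mp hF hfF
        rcases Finset.mem_union.mp this with h' | h'
        · exact absurd h' hfE
        · exact h'
      exact Or.inr ⟨f, hfD, hfF, y, mem_epts.mpr hy, hr⟩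
  have step2 : PrE (E ∪ D) α (fun F =>
        (SimpleGraph.fromEdgeSet ((F ∩ E : Finset (Sym2 V)) : Set (Sym2 V))).Reachable a u ∨
        ∃ f ∈ D, f ∈ F ∧ ∃ y ∈ epts f,
          (SimpleGraph.fromEdgeSet ((F ∩ E : Finset (Sym2 V)) : Set (Sym2 V))).Reachable y u)
      ≤ PrE (E ∪ D) α (fun F =>
        (SimpleGraph.fromEdgeSet ((F ∩ E : Finset (Sym2 V)) : Set (Sym2 V))).Reachable a u)
      + ∑ f ∈ D, PrE (E ∪ D) α (fun F => f ∈ F ∧ ∃ y ∈ epts f,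
          (SimpleGraph.fromEdgeSet ((F ∩ E : Finset (Sym2 V)) : Set (Sym2 V))).Reachable y u) := by
    refine le_trans (PrE_or_le hα0 hα1) ?_
    gcongr
    exact PrE_exists_le hα0 hα1 D _
  have step3 : ∀ f ∈ D, PrE (E ∪ D) α (fun F => f ∈ F ∧ ∃ y ∈ epts f,
        (SimpleGraph.fromEdgeSet ((F ∩ E : Finset (Sym2 V)) : Set (Sym2 V))).Reachable y u)
      ≤ ∑ y ∈ epts f, α * prox E α y u := by
    intro f hfD
    have hcg : PrE (E ∪ D) α (fun F => f ∈ F ∧ ∃ y ∈ epts f,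
          (SimpleGraph.fromEdgeSet ((F ∩ E : Finset (Sym2 V)) : Set (Sym2 V))).Reachable y u)
        = PrE (E ∪ D) α (fun F => ∃ y ∈ epts f, f ∈ F ∧
          (SimpleGraph.fromEdgeSet ((F ∩ E : Finset (Sym2 V)) : Set (Sym2 V))).Reachable y u) :=
      PrE_congr fun F _ => by tauto
    rw [hcg]
    refine le_trans (PrE_exists_le hα0 hα1 (epts f) _) ?_
    refine Finset.sum_le_sum fun y _ => ?_
    rw [PrE_edge_restrict (Q := fun G =>
      (SimpleGraph.fromEdgeSet (G : Set (Sym2 V))).Reachable y u) hα0 hα1 hD hfD,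
      prox_eq_PrE (E := E) y u]
  have step4 : PrE (E ∪ D) α (fun F =>
        (SimpleGraph.fromEdgeSet ((F ∩ E : Finset (Sym2 V)) : Set (Sym2 V))).Reachable a u)
      = prox E α a u := by
    rw [PrE_restrict (Q := fun G =>
      (SimpleGraph.fromEdgeSet (G : Set (Sym2 V))).Reachable a u) hD, prox_eq_PrE (E := E) a u]
  calc PrE (E ∪ D) α (fun F => (SimpleGraph.fromEdgeSet (F : Set (Sym2 V))).Reachable a u)
      ≤ _ := step1
    _ ≤ _ := step2
    _ ≤ prox E α a u + ∑ f ∈ D, ∑ y ∈ epts f, α * prox E α y u := by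
        rw [step4]; gcongr with f hf; exact step3 f hf

/-- single-source constant-witness existence. -/
theorem single_source_constant_witness
    (E : Finset (Sym2 V)) (α : ℝ) (hα0 : 0 ≤ α) (hα1 : α ≤ 1)
    (vs : V) (k : ℕ) :
    ∃ S : Finset (Sym2 V), S.card ≤ 2 * k ∧ (∀ e ∈ S, e ∉ E ∧ vs ∈ e) ∧
      ∀ u : V, ∃ W ⊆ S, W.card ≤ 1 ∧
        optReach E α k vs / (2 * (k : ℝ) + 2) ≤ prox (E ∪ W) α vs u := by
  have hden : (0:ℝ) < 2 * (k:ℝ) + 2 := by positivity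
  rcases le_or_gt (optReach E α k vs) 0 with hle | hpos
  · refine ⟨∅, by simp, by simp, fun u => ⟨∅, Finset.Subset.refl _, by simp, ?_⟩⟩
    rw [Finset.union_empty]
    exact le_trans (div_nonpos_of_nonpos_of_nonneg hle hden.le) (prox_nonneg hα0 hα1 vs u)
  · haveI : Nonempty {F : Finset (Sym2 V) // F.card ≤ k ∧ ∀ e ∈ F, e ∉ E} :=
      ⟨⟨∅, by simp⟩⟩
    obtain ⟨Fs, hFs⟩ := Finite.exists_max
      (fun F : {F : Finset (Sym2 V) // F.card ≤ k ∧ ∀ e ∈ F, e ∉ E} => reach (E ∪ F.1) α vs)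
    have hopt : optReach E α k vs ≤ reach (E ∪ Fs.1) α vs := ciSup_le hFs
    set D := Fs.1 with hD
    set Y := D.biUnion epts with hY
    set S := (Y.image fun y => s(vs, y)).filter (fun e => e ∉ E) with hS
    have hScard : S.card ≤ 2 * k := by
      calc S.card ≤ (Y.image fun y => s(vs, y)).card := Finset.card_filter_le _ _
        _ ≤ Y.card := Finset.card_image_le
        _ ≤ ∑ f ∈ D, (epts f).card := Finset.card_biUnion_le
        _ ≤ D.card * 2 := by
            simpa using Finset.sum_le_card_nsmul D _ 2 fun f _ => card_epts f
        _ ≤ k * 2 := Nat.mul_le_mul_right 2 Fs.2.1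
        _ = 2 * k := Nat.mul_comm _ _
    have hSmem : ∀ e ∈ S, e ∉ E ∧ vs ∈ e := by
      intro e he
      rw [hS, Finset.mem_filter] at he
      obtain ⟨him, hnE⟩ := he
      obtain ⟨y, hy, rfl⟩ := Finset.mem_image.mp him
      exact ⟨hnE, Sym2.mem_mk_left vs y⟩
    refine ⟨S, hScard, hSmem, fun u => ?_⟩
    by_contra hcon
    push_neg at hcon
    have hB : 0 < optReach E α k vs / (2 * (k:ℝ) + 2) := div_pos hpos hden
    have h0 : prox E α vs u < optReach E α k vs / (2 * (k:ℝ) + 2) := by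
      have := hcon ∅ (Finset.empty_subset S) (by simp)
      rwa [Finset.union_empty] at this
    by_cases hu : u = vs
    · have hopt1 : optReach E α k vs ≤ 1 := by
        refine ciSup_le fun F => ?_
        rcases isEmpty_or_nonempty {u' : V // u' ≠ vs} with hempty | hne
        · rw [reach, iInf_of_isEmpty, Real.sInf_empty]; norm_num
        · exact le_trans
            (ciInf_le (Set.Finite.bddBelow (Set.finite_range _)) (Classical.arbitrary _))
            (prox_le_one hα0 hα1 _ _)
      have hB1 : optReach E α k vs / (2 * (k:ℝ) + 2) ≤ 1 := by
        rw [div_le_one hden]; linarith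
      rw [hu, prox_self hα0 hα1] at h0
      linarith
    · have hreach : reach (E ∪ D) α vs ≤ prox (E ∪ D) α vs u := by
        have h := ciInf_le (f := fun u' : {u' : V // u' ≠ vs} => prox (E ∪ D) α vs u'.1)
          (Set.Finite.bddBelow (Set.finite_range _)) ⟨u, hu⟩
        simpa [reach] using h
      have hmain := prox_union_le hα0 hα1 Fs.2.2 vs u
      have hterm : ∀ y ∈ Y, α * prox E α y u < optReach E α k vs / (2 * (k:ℝ) + 2) := by
        intro y hyY
        by_cases h1 : vs = y
        · subst h1
          exact lt_of_le_of_lt (mul_le_of_le_one_left (prox_nonneg hα0 hα1 _ _) hα1) h0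
        · by_cases h2 : s(vs, y) ∈ E
          · exact lt_of_le_of_lt (prox_mem_ge hα0 hα1 h1 h2 u) h0
          · have heS : s(vs, y) ∈ S :=
              Finset.mem_filter.mpr ⟨Finset.mem_image_of_mem _ hyY, h2⟩
            have hc := hcon {s(vs, y)} (Finset.singleton_subset_iff.mpr heS) (by simp)
            rw [show E ∪ {s(vs, y)} = insert s(vs, y) E by
              rw [Finset.union_comm]; exact (Finset.insert_eq _ _).symm] at hc
            exact lt_of_le_of_lt (prox_insert_ge hα0 hα1 h1 h2 u) hc
      have hsum : ∑ f ∈ D, ∑ y ∈ epts f, α * prox E α y u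
          ≤ (D.card : ℝ) * (2 * (optReach E α k vs / (2 * (k:ℝ) + 2))) := by
        refine le_trans (Finset.sum_le_card_nsmul D _
          (2 * (optReach E α k vs / (2 * (k:ℝ) + 2))) fun f hf => ?_) (by rw [nsmul_eq_mul])
        refine le_trans (Finset.sum_le_card_nsmul _ _
          (optReach E α k vs / (2 * (k:ℝ) + 2))
          fun y hy => (hterm y (Finset.mem_biUnion.mpr ⟨f, hf, hy⟩)).le) ?_
        rw [nsmul_eq_mul]
        exact mul_le_mul_of_nonneg_right (by exact_mod_cast card_epts f) hB.le
      have hDk : (D.card : ℝ) ≤ (k : ℝ) := by exact_mod_cast Fs.2.1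
      have hBmul : optReach E α k vs
          = optReach E α k vs / (2 * (k:ℝ) + 2) * (2 * (k:ℝ) + 2) :=
        (div_mul_cancel₀ _ hden.ne').symm
      nlinarith [mul_le_mul_of_nonneg_right hDk
        (by positivity : (0:ℝ) ≤ 2 * (optReach E α k vs / (2 * (k:ℝ) + 2)))]
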